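/- For any finite string tree automaton there exists an equivalent complete FSTA, i.e. a deterministic FSTA whose transition function Δ: Q × Q → Q is defined on every pair of states, recognising the same language (up to the injective alphabet renaming a ↦ {a}). -/
import Mathlib


/-!  Common definitions: string trees over an alphabet (following
N. Schmidt, A. Patel, "Using Tree Automata and Regular Expressions to
Manipulate Hierarchically Structured Data").

Symbols: an ambient type `U` of "plain" symbols, extended with the two
angle brackets and the slash. -/

inductive TSym (U : Type) : Type where
  | op : TSym U          -- ⟨
  | cl : TSym U          -- ⟩
  | slash : TSym U       -- /
  | ltr : U → TSym U     -- a plain symbol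

namespace StringTree

variable {U V : Type}

/-- The letters of an alphabet `S ⊆ U`, viewed as (non-bracket) symbols. -/
def ltrs (S : Set U) : Set (TSym U) := {x | ∃ a ∈ S, x = TSym.ltr a}

/-- String trees over a set `S` of allowed non-bracket symbols:
`⟨⟩ ∈ T`, `⟨a⟩ ∈ T` for `a ∈ S`, closed under concatenation
`⟨x⟩·⟨y⟩ = ⟨xy⟩` and encapsulation `t ↦ ⟨t⟩`. -/
inductive IsTree (S : Set (TSym U)) : List (TSym U) → Prop where
  | nil : IsTree S [TSym.op, TSym.cl]
  | single {x : TSym U} : x ∈ S → IsTree S [TSym.op, x, TSym.cl]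
  | concat {x y : List (TSym U)} :
      IsTree S (TSym.op :: (x ++ [TSym.cl])) → IsTree S (TSym.op :: (y ++ [TSym.cl])) →
      IsTree S (TSym.op :: ((x ++ y) ++ [TSym.cl]))
  | encap {t : List (TSym U)} : IsTree S t → IsTree S (TSym.op :: (t ++ [TSym.cl]))

/-- `T(Σ)`, the set of string trees over the alphabet `Σ ⊆ U`. -/
def TreeSet (S : Set U) : Set (List (TSym U)) := {t | IsTree (ltrs S) t}

/-- A plain string, viewed as a string of symbols. -/
def strOf (s : List U) : List (TSym U) := s.map TSym.ltr

/-- Move relation of a generalised non-deterministic finite string tree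
automaton with initial states `Q0`, horizontal rules `Δ` and vertical
rules `γ`:
(a) `l⟨s⟩r ⇒ l⟨a/s⟩r` if `a ∈ Q0` (initial state assignment);
(b) `l⟨a/bs⟩r ⇒ l⟨c/s⟩r` if `(a,b) → c ∈ Δ` (horizontal move);
(c) `l⟨a/⟩r ⇒ lbr` if `b ∈ γ a` (vertical move). -/
inductive GMove (Q0 : Set U) (Δ : Set (U × U × U)) (γ : U → Set U) :
    List (TSym U) → List (TSym U) → Prop where
  | init {l r : List (TSym U)} {s : List U} {a : U} :
      a ∈ Q0 →
      GMove Q0 Δ γ (l ++ [TSym.op] ++ strOf s ++ [TSym.cl] ++ r)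
        (l ++ [TSym.op, TSym.ltr a, TSym.slash] ++ strOf s ++ [TSym.cl] ++ r)
  | horiz {l r : List (TSym U)} {s : List U} {a b c : U} :
      (a, b, c) ∈ Δ →
      GMove Q0 Δ γ (l ++ [TSym.op, TSym.ltr a, TSym.slash, TSym.ltr b] ++ strOf s ++ [TSym.cl] ++ r)
        (l ++ [TSym.op, TSym.ltr c, TSym.slash] ++ strOf s ++ [TSym.cl] ++ r)
  | vert {l r : List (TSym U)} {a b : U} :
      b ∈ γ a →
      GMove Q0 Δ γ (l ++ [TSym.op, TSym.ltr a, TSym.slash, TSym.cl] ++ r)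
        (l ++ [TSym.ltr b] ++ r)

/-- Move relation of an NFSTA: the GNFSTA moves with the single initial
state `q0` and with the vertical move `l⟨a/⟩r ⇒ lar`. -/
def NMove (q0 : U) (Δ : Set (U × U × U)) : List (TSym U) → List (TSym U) → Prop :=
  GMove {q0} Δ (fun a => {a})

/-- The final tree `⟨q/⟩`. -/
def finalTree (q : U) : List (TSym U) := [TSym.op, TSym.ltr q, TSym.slash, TSym.cl]

/-- Acceptance by a GNFSTA: `t ⇒* ⟨q_f/⟩` for some `q_f ∈ Q_f`. -/
def GAccepts (Q0 : Set U) (Δ : Set (U × U × U)) (γ : U → Set U) (Qf : Set U)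
    (t : List (TSym U)) : Prop :=
  ∃ qf ∈ Qf, Relation.ReflTransGen (GMove Q0 Δ γ) t (finalTree qf)

/-- The language of a GNFSTA: the set of trees of `T(Σ)` it accepts. -/
def GLang (Sa Q0 : Set U) (Δ : Set (U × U × U)) (γ : U → Set U) (Qf : Set U) :
    Set (List (TSym U)) :=
  {t | t ∈ TreeSet Sa ∧ GAccepts Q0 Δ γ Qf t}

/-- Acceptance by an NFSTA. -/
def NAccepts (q0 : U) (Δ : Set (U × U × U)) (Qf : Set U) (t : List (TSym U)) : Prop :=
  GAccepts {q0} Δ (fun a => {a}) Qf t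

/-- The language of an NFSTA. -/
def NLang (Sa : Set U) (q0 : U) (Δ : Set (U × U × U)) (Qf : Set U) : Set (List (TSym U)) :=
  GLang Sa {q0} Δ (fun a => {a}) Qf

/-- Well-formedness of a GNFSTA `(Σ, Q, Q_f, Q₀, Δ, γ)`:
`Q` is finite, `Σ ⊆ Q`, `Q_f ⊆ Q`, `Q₀ ⊆ Q`, the rules of `Δ` are over `Q`,
and `γ` maps states of `Q` to sets of states of `Q`. -/
def GWF (Sa Q Qf Q0 : Set U) (Δ : Set (U × U × U)) (γ : U → Set U) : Prop :=
  Q.Finite ∧ Sa ⊆ Q ∧ Qf ⊆ Q ∧ Q0 ⊆ Q ∧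
    (∀ p ∈ Δ, p.1 ∈ Q ∧ p.2.1 ∈ Q ∧ p.2.2 ∈ Q) ∧ (∀ q ∈ Q, γ q ⊆ Q)

/-- Well-formedness of an NFSTA `(Σ, Q, Q_f, q₀, Δ)`. -/
def NWF (Sa Q Qf : Set U) (q0 : U) (Δ : Set (U × U × U)) : Prop :=
  Q.Finite ∧ Sa ⊆ Q ∧ Qf ⊆ Q ∧ q0 ∈ Q ∧ ∀ p ∈ Δ, p.1 ∈ Q ∧ p.2.1 ∈ Q ∧ p.2.2 ∈ Q

/-- A GNFSTA has pure states: no horizontal or vertical rule produces a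
symbol of `Σ`, no horizontal rule has its state (first) component in `Σ`,
`γ(a) = ∅` for `a ∈ Σ`, and `Q₀ ∪ Q_f ⊆ Q ∖ Σ`. -/
def PureG (Sa Q Qf Q0 : Set U) (Δ : Set (U × U × U)) (γ : U → Set U) : Prop :=
  (∀ p ∈ Δ, p.1 ∉ Sa ∧ p.2.2 ∉ Sa) ∧ (∀ a ∈ Sa, γ a = ∅) ∧
    (∀ q : U, ∀ p ∈ γ q, p ∉ Sa) ∧ Q0 ⊆ Q \ Sa ∧ Qf ⊆ Q \ Sa

/-- An NFSTA has pure states. -/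
def PureN (Sa Q Qf : Set U) (q0 : U) (Δ : Set (U × U × U)) : Prop :=
  (∀ p ∈ Δ, p.1 ∉ Sa ∧ p.2.2 ∉ Sa) ∧ q0 ∈ Q \ Sa ∧ Qf ⊆ Q \ Sa


/-! Additional notions. -/

/-- `⟨s₀ t₁ s₁ ⋯ tₙ sₙ⟩`: the string tree assembled from a head string `s₀`
and a list of pairs `(tᵢ, sᵢ)` of a subtree and a following string. -/
def flatRep (s0 : List U) (rest : List (List (TSym U) × List U)) : List (TSym U) :=
  TSym.op :: (strOf s0 ++ (rest.map (fun p => p.1 ++ strOf p.2)).flatten ++ [TSym.cl])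

/-- The inner string of a tree `⟨x⟩`, i.e. `x`. -/
def innerStr (t : List (TSym U)) : List (TSym U) := (t.drop 1).dropLast

/-- Tree concatenation `⟨x⟩·⟨y⟩ = ⟨xy⟩`. -/
def tconc (u v : List (TSym U)) : List (TSym U) :=
  TSym.op :: ((innerStr u ++ innerStr v) ++ [TSym.cl])

/-- The null tree `⟨⟩`. -/
def nilTree : List (TSym U) := [TSym.op, TSym.cl]

/-- `w` is a string over `Q ∪ {/}`. -/
def OverQSlash (Q : Set U) (w : List (TSym U)) : Prop :=
  ∀ x ∈ w, x = TSym.slash ∨ ∃ q ∈ Q, x = TSym.ltr q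

/-- Renaming of symbols along a map of plain symbols. -/
def symRel (f : U → V) : TSym U → TSym V
  | TSym.op => TSym.op
  | TSym.cl => TSym.cl
  | TSym.slash => TSym.slash
  | TSym.ltr a => TSym.ltr (f a)

/-- Renaming of the symbols of a tree along a map of plain symbols. -/
def treeRel (f : U → V) (t : List (TSym U)) : List (TSym V) := t.map (symRel f)

/-- The injective renaming `a ↦ {a}`. -/
def sing : U → Set U := fun a => {a}

/-- The vertical-rule function `γ` of a pure-state GNFSTA, extended by
`γ(a) = {a}` for `a ∈ Σ` and to sets by unions: `γ(b') = ⋃_{b ∈ b'} γ(b)`. -/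
def gammaExt (Sa : Set U) (γ : U → Set U) (b' : Set U) : Set U :=
  {c | ∃ b ∈ b', c ∈ γ b ∨ (c = b ∧ b ∈ Sa)}

/-- The transition function of the subset construction:
`Δ'(a', b') = {c | (a,b) → c ∈ Δ, a ∈ a', b ∈ γ(b')}`. -/
def subsetDelta (Sa : Set U) (γ : U → Set U) (Δ : Set (U × U × U)) (a' b' : Set U) : Set U :=
  {c | ∃ a ∈ a', ∃ b ∈ gammaExt Sa γ b', (a, b, c) ∈ Δ}

/-- The rule set of the subset-construction DFSTA, defined on pairs of
subsets of `Q`. -/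
def subsetRules (Sa : Set U) (γ : U → Set U) (Δ : Set (U × U × U)) (Q : Set U) :
    Set (Set U × Set U × Set U) :=
  {x | x.1 ⊆ Q ∧ x.2.1 ⊆ Q ∧ x.2.2 = subsetDelta Sa γ Δ x.1 x.2.1}

/-- A rule set is deterministic: at most one rule per left-hand side. -/
def Deterministic {α : Type} (Δ : Set (α × α × α)) : Prop :=
  ∀ a b c₁ c₂, (a, b, c₁) ∈ Δ → (a, b, c₂) ∈ Δ → c₁ = c₂

/-- `L` is recognised by some GNFSTA over the alphabet `Sa`. -/
def RecogG (Sa : Set U) (L : Set (List (TSym U))) : Prop :=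
  ∃ Q Qf Q0 Δ γ, GWF Sa Q Qf Q0 Δ γ ∧ GLang Sa Q0 Δ γ Qf = L

/-- `L` is recognised by some NFSTA over the alphabet `Sa`. -/
def RecogN (Sa : Set U) (L : Set (List (TSym U))) : Prop :=
  ∃ Q Qf q0 Δ, NWF Sa Q Qf q0 Δ ∧ NLang Sa q0 Δ Qf = L

/-- `L` is recognised, after the injective alphabet renaming `a ↦ {a}`,
by some deterministic FSTA. -/
def RecogD (Sa : Set U) (L : Set (List (TSym U))) : Prop :=
  ∃ (Q' Qf' : Set (Set U)) (q0' : Set U) (Δ' : Set (Set U × Set U × Set U)),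
    NWF (sing '' Sa) Q' Qf' q0' Δ' ∧ Deterministic Δ' ∧
    NLang (sing '' Sa) q0' Δ' Qf' = treeRel sing '' L

/-- Runs of a classical finite (string) automaton with transition map `δ`. -/
inductive FASteps (δ : U → U → Set U) : U → List U → U → Prop where
  | nil (q : U) : FASteps δ q [] q
  | cons {q a p s q'} : p ∈ δ q a → FASteps δ p s q' → FASteps δ q (a :: s) q'

/-- The language of a classical finite automaton `(Sa, Q, Q_f, q₀, δ)`. -/
def FALang (Sa : Set U) (δ : U → U → Set U) (q0 : U) (Qf : Set U) : Set (List U) :=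
  {s | (∀ a ∈ s, a ∈ Sa) ∧ ∃ qf ∈ Qf, FASteps δ q0 s qf}

/-- `n`-fold composition of a relation: `relPow r n a b` iff `a ⇒ⁿ b`. -/
def relPow {α : Type} (r : α → α → Prop) : ℕ → α → α → Prop
  | 0, a, b => a = b
  | n + 1, a, c => ∃ b, r a b ∧ relPow r n b c


/-! Ranked terms and classical tree automata. -/

/-- Unranked terms (rose trees) over a symbol type `F`. -/
inductive PreTerm (F : Type) : Type where
  | node : F → List (PreTerm F) → PreTerm F

/-- A term is well-ranked w.r.t. an arity function. -/
inductive WellRanked {F : Type} (ar : F → ℕ) : PreTerm F → Prop where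
  | node {f : F} {ts : List (PreTerm F)} : ts.length = ar f →
      (∀ t ∈ ts, WellRanked ar t) → WellRanked ar (PreTerm.node f ts)

/-- The term-to-string-tree map `τ`:
`τ(f(t₁,…,t_p)) = ⟨f τ(t₁) ⋯ τ(t_p)⟩` (and `τ(a) = ⟨a⟩` for constants). -/
def tau {F : Type} : PreTerm F → List (TSym F)
  | PreTerm.node f ts =>
      TSym.op :: TSym.ltr f :: ((ts.attach.map (fun x => tau x.1)).flatten ++ [TSym.cl])
  decreasing_by
    simp only [PreTerm.node.sizeOf_spec]
    have h := List.sizeOf_lt_of_mem x.2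
    omega

/-- A term over the ranked alphabet given by symbols `Sa` and arities `ar`. -/
inductive GoodTerm (Sa : Set U) (ar : U → ℕ) : PreTerm U → Prop where
  | node {f : U} {ts : List (PreTerm U)} : f ∈ Sa → ts.length = ar f →
      (∀ t ∈ ts, GoodTerm Sa ar t) → GoodTerm Sa ar (PreTerm.node f ts)

/-- Bottom-up runs of a classical tree automaton with rules
`f(q₁,…,qₙ) → q`: `CRun Δh t q` means the run assigns state `q` to `t`. -/
inductive CRun (Δh : Set (U × List U × U)) : PreTerm U → U → Prop where
  | node {f : U} {ts : List (PreTerm U)} {qs : List U} {q : U} :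
      (f, qs, q) ∈ Δh → qs.length = ts.length →
      (∀ p ∈ ts.zip qs, CRun Δh p.1 p.2) →
      CRun Δh (PreTerm.node f ts) q

/-- The term language of a classical tree automaton. -/
def TermLang (Sa : Set U) (ar : U → ℕ) (Δh : Set (U × List U × U)) (Qhf : Set U) :
    Set (PreTerm U) :=
  {t | GoodTerm Sa ar t ∧ ∃ q ∈ Qhf, CRun Δh t q}

/-! Vertical tree representation of strings. -/

def omegaRev : List U → List (TSym U)
  | [] => [TSym.op, TSym.cl]
  | a :: s => TSym.op :: (omegaRev s ++ [TSym.ltr a, TSym.cl])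

/-- The vertical tree representation `ω(a₁⋯aₙ) = ⟨⟨⋯⟨⟩a₁⟩a₂⟩⋯aₙ⟩`,
defined by `ω(ε) = ⟨⟩` and `ω(sa) = ⟨ω(s)⟩·⟨a⟩`. -/
def omega (s : List U) : List (TSym U) := omegaRev s.reverse

/-! Regular string tree grammars. -/

/-- A regular expression is over the symbol set `S`. -/
def REOver (S : Set U) : RegularExpression U → Prop
  | RegularExpression.zero => True
  | RegularExpression.epsilon => True
  | RegularExpression.char a => a ∈ S
  | RegularExpression.plus e₁ e₂ => REOver S e₁ ∧ REOver S e₂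
  | RegularExpression.comp e₁ e₂ => REOver S e₁ ∧ REOver S e₂
  | RegularExpression.star e => REOver S e

/-- One derivation step of a regular string tree grammar with rule set `R`:
`lXr →_G l⟨x⟩r` whenever `X → ⟨e⟩ ∈ R` and `x ∈ ⟦e⟧`. -/
def GDeriv (R : Set (U × RegularExpression U)) (u v : List (TSym U)) : Prop :=
  ∃ (l r : List (TSym U)) (X : U) (e : RegularExpression U) (x : List U),
    (X, e) ∈ R ∧ x ∈ e.matches' ∧
    u = l ++ [TSym.ltr X] ++ r ∧ v = l ++ (TSym.op :: (strOf x ++ [TSym.cl])) ++ r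

/-- The language generated by a regular string tree grammar with axiom `S`:
all trees of `T(Σ)` derivable from `S`. -/
def GramLang (Sa : Set U) (S : U) (R : Set (U × RegularExpression U)) :
    Set (List (TSym U)) :=
  {t | t ∈ TreeSet Sa ∧ Relation.ReflTransGen (GDeriv R) [TSym.ltr S] t}

/-- Well-formedness of a regular string tree grammar `(Σ, N, S, R)`. -/
def GramWF (Sa N : Set U) (S : U) (R : Set (U × RegularExpression U)) : Prop :=
  N.Finite ∧ Disjoint N Sa ∧ S ∈ N ∧ ∀ p ∈ R, p.1 ∈ N ∧ REOver (Sa ∪ N) p.2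

/-! The map `Γ` and the instance relation `⊴` of the subset-construction
equivalence proof. -/

/-- `Γ` applies (the extension of) `γ` to every set-symbol that is not
immediately followed by a slash:
`Γ(ε)=ε`, `Γ(⟨s)=⟨Γ(s)`, `Γ(⟩s)=⟩Γ(s)`, `Γ(a/s)=a/Γ(s)`, `Γ(as)=γ(a)Γ(s)`. -/
def GammaMap (g : Set U → Set U) : List (TSym (Set U)) → List (TSym (Set U))
  | [] => []
  | TSym.op :: s => TSym.op :: GammaMap g s
  | TSym.cl :: s => TSym.cl :: GammaMap g s
  | TSym.slash :: s => TSym.slash :: GammaMap g s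
  | TSym.ltr a :: TSym.slash :: s => TSym.ltr a :: TSym.slash :: GammaMap g s
  | TSym.ltr a :: s => TSym.ltr (g a) :: GammaMap g s

/-- Symbol-wise instance relation: brackets and slashes match, and a plain
symbol is an element of the corresponding set-symbol. -/
inductive SymInst : TSym U → TSym (Set U) → Prop where
  | op : SymInst TSym.op TSym.op
  | cl : SymInst TSym.cl TSym.cl
  | slash : SymInst TSym.slash TSym.slash
  | ltr {a : U} {A : Set U} : a ∈ A → SymInst (TSym.ltr a) (TSym.ltr A)

/-- `v ⊴ v'`: `v` is an instance of `v'`. -/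
def Inst (v : List (TSym U)) (v' : List (TSym (Set U))) : Prop :=
  List.Forall₂ SymInst v v'

end StringTree

namespace StringTree
/-! Auxiliary lemmas for the subset construction. -/

variable {U : Type}

/-- Pointwise instance relation on plain strings. -/
def InstS (s : List U) (s' : List (Set U)) : Prop :=
  List.Forall₂ (fun a A => a ∈ A) s s'

theorem forall2_append_left {α β : Type*} {R : α → β → Prop} {l₁ l₂ : List α} {m : List β}
    (h : List.Forall₂ R (l₁ ++ l₂) m) :
    ∃ m₁ m₂, m = m₁ ++ m₂ ∧ List.Forall₂ R l₁ m₁ ∧ List.Forall₂ R l₂ m₂ := by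
  induction l₁ generalizing m with
  | nil => exact ⟨[], m, rfl, List.Forall₂.nil, h⟩
  | cons a l ih =>
    cases h with
    | cons hab h' =>
      obtain ⟨m₁, m₂, rfl, h₁, h₂⟩ := ih h'
      exact ⟨_ :: m₁, m₂, rfl, List.Forall₂.cons hab h₁, h₂⟩

theorem forall2_append_right {α β : Type*} {R : α → β → Prop} {m₁ m₂ : List β} {l : List α}
    (h : List.Forall₂ R l (m₁ ++ m₂)) :
    ∃ l₁ l₂, l = l₁ ++ l₂ ∧ List.Forall₂ R l₁ m₁ ∧ List.Forall₂ R l₂ m₂ := by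
  induction m₁ generalizing l with
  | nil => exact ⟨[], l, rfl, List.Forall₂.nil, h⟩
  | cons b m ih =>
    cases h with
    | cons hab h' =>
      obtain ⟨l₁, l₂, rfl, h₁, h₂⟩ := ih h'
      exact ⟨_ :: l₁, l₂, rfl, List.Forall₂.cons hab h₁, h₂⟩

theorem inst_append_left {l₁ l₂ : List (TSym U)} {m : List (TSym (Set U))}
    (h : Inst (l₁ ++ l₂) m) :
    ∃ m₁ m₂, m = m₁ ++ m₂ ∧ Inst l₁ m₁ ∧ Inst l₂ m₂ :=
  forall2_append_left h

theorem inst_append_right {m₁ m₂ : List (TSym (Set U))} {l : List (TSym U)}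
    (h : Inst l (m₁ ++ m₂)) :
    ∃ l₁ l₂, l = l₁ ++ l₂ ∧ Inst l₁ m₁ ∧ Inst l₂ m₂ :=
  forall2_append_right h

theorem inst_append {l₁ l₂ : List (TSym U)} {m₁ m₂ : List (TSym (Set U))}
    (h₁ : Inst l₁ m₁) (h₂ : Inst l₂ m₂) : Inst (l₁ ++ l₂) (m₁ ++ m₂) :=
  List.rel_append h₁ h₂

theorem inst_cons_left {x : TSym U} {v : List (TSym U)} {m : List (TSym (Set U))}
    (h : Inst (x :: v) m) : ∃ y m', m = y :: m' ∧ SymInst x y ∧ Inst v m' := by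
  cases h with
  | cons h1 h2 => exact ⟨_, _, rfl, h1, h2⟩

theorem inst_cons_right {v : List (TSym U)} {y : TSym (Set U)} {m' : List (TSym (Set U))}
    (h : Inst v (y :: m')) : ∃ x v', v = x :: v' ∧ SymInst x y ∧ Inst v' m' := by
  cases h with
  | cons h1 h2 => exact ⟨_, _, rfl, h1, h2⟩

theorem inst_nil_left {m : List (TSym (Set U))} (h : Inst ([] : List (TSym U)) m) : m = [] := by
  cases h; rfl

theorem inst_nil_right {v : List (TSym U)} (h : Inst v ([] : List (TSym (Set U)))) : v = [] := by
  cases h; rfl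

theorem symInst_op_right {x : TSym U} (h : SymInst x (TSym.op : TSym (Set U))) :
    x = TSym.op := by cases h; rfl

theorem symInst_cl_right {x : TSym U} (h : SymInst x (TSym.cl : TSym (Set U))) :
    x = TSym.cl := by cases h; rfl

theorem symInst_slash_right {x : TSym U} (h : SymInst x (TSym.slash : TSym (Set U))) :
    x = TSym.slash := by cases h; rfl

theorem symInst_ltr_right {x : TSym U} {A : Set U} (h : SymInst x (TSym.ltr A)) :
    ∃ a ∈ A, x = TSym.ltr a := by
  cases h with
  | ltr ha => exact ⟨_, ha, rfl⟩

theorem symInst_op_left {y : TSym (Set U)} (h : SymInst (TSym.op : TSym U) y) :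
    y = TSym.op := by cases h; rfl

theorem symInst_cl_left {y : TSym (Set U)} (h : SymInst (TSym.cl : TSym U) y) :
    y = TSym.cl := by cases h; rfl

theorem symInst_slash_left {y : TSym (Set U)} (h : SymInst (TSym.slash : TSym U) y) :
    y = TSym.slash := by cases h; rfl

theorem symInst_ltr_left {a : U} {y : TSym (Set U)} (h : SymInst (TSym.ltr a) y) :
    ∃ A : Set U, y = TSym.ltr A ∧ a ∈ A := by
  cases h with
  | ltr ha => exact ⟨_, rfl, ha⟩

theorem inst_strOf_left {s : List U} {m : List (TSym (Set U))} (h : Inst (strOf s) m) :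
    ∃ s', m = strOf s' ∧ InstS s s' := by
  induction s generalizing m with
  | nil =>
    have : m = [] := inst_nil_left h
    exact ⟨[], by simp [this, strOf], List.Forall₂.nil⟩
  | cons a s ih =>
    obtain ⟨y, m', rfl, h1, h2⟩ := inst_cons_left h
    obtain ⟨A, rfl, ha⟩ := symInst_ltr_left h1
    obtain ⟨s', rfl, hs⟩ := ih h2
    exact ⟨A :: s', rfl, List.Forall₂.cons ha hs⟩

theorem inst_strOf_right {s' : List (Set U)} {v : List (TSym U)} (h : Inst v (strOf s')) :
    ∃ s, v = strOf s ∧ InstS s s' := by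
  induction s' generalizing v with
  | nil =>
    have : v = [] := inst_nil_right h
    exact ⟨[], by simp [this, strOf], List.Forall₂.nil⟩
  | cons A s' ih =>
    obtain ⟨x, v', rfl, h1, h2⟩ := inst_cons_right h
    obtain ⟨a, ha, rfl⟩ := symInst_ltr_right h1
    obtain ⟨s, rfl, hs⟩ := ih h2
    exact ⟨a :: s, rfl, List.Forall₂.cons ha hs⟩

theorem instS_strOf {s : List U} {s' : List (Set U)} (h : InstS s s') :
    Inst (strOf s) (strOf s') := by
  induction h with
  | nil => exact List.Forall₂.nil
  | cons h1 h2 ih => exact List.Forall₂.cons (SymInst.ltr h1) ih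

theorem symInst_symRel_sing {x y : TSym U} (h : SymInst x (symRel sing y)) : x = y := by
  cases y with
  | op => exact symInst_op_right h
  | cl => exact symInst_cl_right h
  | slash => exact symInst_slash_right h
  | ltr a =>
    obtain ⟨b, hb, rfl⟩ := symInst_ltr_right h
    have : b = a := hb
    rw [this]

theorem inst_treeRel_eq {t v : List (TSym U)} (h : Inst v (treeRel sing t)) : v = t := by
  induction t generalizing v with
  | nil => exact inst_nil_right h
  | cons y t ih =>
    obtain ⟨x, v', rfl, h1, h2⟩ := inst_cons_right h
    rw [symInst_symRel_sing h1, ih h2]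

theorem inst_treeRel (v : List (TSym U)) : Inst v (treeRel sing v) := by
  induction v with
  | nil => exact List.Forall₂.nil
  | cons x v ih =>
    refine List.Forall₂.cons ?_ ih
    cases x with
    | op => exact SymInst.op
    | cl => exact SymInst.cl
    | slash => exact SymInst.slash
    | ltr a => exact SymInst.ltr rfl

/-- Letters of a tree belong to the alphabet. -/
theorem isTree_mem {S : Set (TSym U)} {t : List (TSym U)} (h : IsTree S t) :
    ∀ x ∈ t, x = TSym.op ∨ x = TSym.cl ∨ x ∈ S := by
  induction h with
  | nil =>
    intro x hx
    simp only [List.mem_cons, List.not_mem_nil, or_false] at hx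
    rcases hx with rfl | rfl
    · left; rfl
    · right; left; rfl
  | single hs =>
    intro x hx
    simp only [List.mem_cons, List.not_mem_nil, or_false] at hx
    rcases hx with rfl | rfl | rfl
    · left; rfl
    · right; right; exact hs
    · right; left; rfl
  | concat h1 h2 ih1 ih2 =>
    intro x hx
    simp only [List.mem_cons, List.mem_append, List.not_mem_nil, or_false] at hx
    rcases hx with rfl | ((hx | hx) | rfl)
    · left; rfl
    · exact ih1 x (by simp [hx])
    · exact ih2 x (by simp [hx])
    · right; left; rfl
  | encap h ih =>
    intro x hx
    simp only [List.mem_cons, List.mem_append, List.not_mem_nil, or_false] at hx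
    rcases hx with rfl | (hx | rfl)
    · left; rfl
    · exact ih x hx
    · right; left; rfl

theorem isTree_treeRel {Sa : Set U} {t : List (TSym U)} (h : IsTree (ltrs Sa) t) :
    IsTree (ltrs (sing '' Sa)) (treeRel sing t) := by
  induction h with
  | nil => exact IsTree.nil
  | single hs =>
    obtain ⟨a, ha, rfl⟩ := hs
    exact IsTree.single ⟨sing a, ⟨a, ha, rfl⟩, rfl⟩
  | concat h1 h2 ih1 ih2 =>
    simp only [treeRel, List.map_cons, List.map_append, List.map_singleton, symRel] at ih1 ih2 ⊢
    exact IsTree.concat ih1 ih2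
  | encap h ih =>
    simp only [treeRel, List.map_cons, List.map_append, List.map_singleton, symRel] at ih ⊢
    exact IsTree.encap ih

theorem symRel_eq_op {f : U → Set U} {z : TSym U} (h : symRel f z = TSym.op) : z = TSym.op := by
  cases z <;> simp [symRel] at h ⊢

theorem symRel_eq_cl {f : U → Set U} {z : TSym U} (h : symRel f z = TSym.cl) : z = TSym.cl := by
  cases z <;> simp [symRel] at h ⊢

theorem treeRel_peel {t1 : List (TSym U)} {x : List (TSym (Set U))}
    (h : treeRel sing t1 = TSym.op :: (x ++ [TSym.cl])) :
    ∃ x₀, t1 = TSym.op :: (x₀ ++ [TSym.cl]) ∧ treeRel sing x₀ = x := by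
  cases t1 with
  | nil => simp [treeRel] at h
  | cons z rest =>
    simp only [treeRel, List.map_cons, List.cons.injEq] at h
    obtain ⟨hz, hrest⟩ := h
    rcases rest.eq_nil_or_concat with rfl | ⟨x₀, w, rfl⟩
    · simp at hrest
    · rw [List.concat_eq_append, List.map_append] at hrest
      obtain ⟨h1, h2⟩ := List.append_inj' hrest (by simp)
      simp only [List.map_cons, List.map_nil, List.cons.injEq, and_true] at h2
      exact ⟨x₀, by rw [List.concat_eq_append, symRel_eq_op hz, symRel_eq_cl h2], h1⟩

theorem tree_of_sing {Sa : Set U} {t' : List (TSym (Set U))}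
    (h : IsTree (ltrs (sing '' Sa)) t') :
    ∃ t, IsTree (ltrs Sa) t ∧ treeRel sing t = t' := by
  induction h with
  | nil => exact ⟨[TSym.op, TSym.cl], IsTree.nil, rfl⟩
  | single hs =>
    obtain ⟨A, ⟨a, ha, rfl⟩, rfl⟩ := hs
    exact ⟨[TSym.op, TSym.ltr a, TSym.cl], IsTree.single ⟨a, ha, rfl⟩, rfl⟩
  | concat h1 h2 ih1 ih2 =>
    obtain ⟨t1, ht1, he1⟩ := ih1
    obtain ⟨t2, ht2, he2⟩ := ih2
    obtain ⟨x₀, rfl, hx⟩ := treeRel_peel he1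
    obtain ⟨y₀, rfl, hy⟩ := treeRel_peel he2
    refine ⟨TSym.op :: ((x₀ ++ y₀) ++ [TSym.cl]), IsTree.concat ht1 ht2, ?_⟩
    simp only [treeRel, List.map_cons, List.map_append, List.map_singleton, symRel]
    rw [← hx, ← hy]; simp [treeRel]
  | encap h ih =>
    obtain ⟨t, ht, rfl⟩ := ih
    refine ⟨TSym.op :: (t ++ [TSym.cl]), IsTree.encap ht, ?_⟩
    simp [treeRel, List.map_append, symRel]

/-! The subset construction. -/

/-- The deterministic transition function on subsets. -/
def detD (Δ : Set (U × U × U)) (a' b' : Set U) : Set U :=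
  {c | ∃ a ∈ a', ∃ b ∈ b', (a, b, c) ∈ Δ}

/-- The rule set of the determinized automaton, restricted to subsets of `Q`. -/
def detRules (Q : Set U) (Δ : Set (U × U × U)) : Set (Set U × Set U × Set U) :=
  {x | x.1 ⊆ Q ∧ x.2.1 ⊆ Q ∧ x.2.2 = detD Δ x.1 x.2.1}

/-- All set-letters occurring in a string are subsets of `Q`. -/
def InvQ (Q : Set U) (v : List (TSym (Set U))) : Prop :=
  ∀ A : Set U, TSym.ltr A ∈ v → A ⊆ Q

theorem invQ_append {Q : Set U} {u v : List (TSym (Set U))} :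
    InvQ Q (u ++ v) ↔ InvQ Q u ∧ InvQ Q v := by
  simp only [InvQ, List.mem_append, or_imp, forall_and]

theorem inst_op {m : List (TSym (Set U))} (h : Inst [TSym.op] m) : m = [TSym.op] := by
  obtain ⟨y, m', rfl, h1, h2⟩ := inst_cons_left h
  rw [symInst_op_left h1, inst_nil_left h2]

theorem inst_cl {m : List (TSym (Set U))} (h : Inst [TSym.cl] m) : m = [TSym.cl] := by
  obtain ⟨y, m', rfl, h1, h2⟩ := inst_cons_left h
  rw [symInst_cl_left h1, inst_nil_left h2]

theorem detD_subset {Q : Set U} {Δ : Set (U × U × U)}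
    (hΔ : ∀ p ∈ Δ, p.1 ∈ Q ∧ p.2.1 ∈ Q ∧ p.2.2 ∈ Q) (a' b' : Set U) :
    detD Δ a' b' ⊆ Q := by
  rintro c ⟨a, _, b, _, hc⟩
  exact (hΔ _ hc).2.2

/-- Forward lock-step simulation: one move of the NFSTA is matched by one
move of the determinized automaton. -/
theorem fwd_step {q0 : U} {Q : Set U} {Δ : Set (U × U × U)}
    (hq0 : q0 ∈ Q) (hΔ : ∀ p ∈ Δ, p.1 ∈ Q ∧ p.2.1 ∈ Q ∧ p.2.2 ∈ Q)
    {v w : List (TSym U)} {v' : List (TSym (Set U))}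
    (hi : Inst v v') (hinv : InvQ Q v') (hm : NMove q0 Δ v w) :
    ∃ w', NMove ({q0} : Set U) (detRules Q Δ) v' w' ∧ Inst w w' ∧ InvQ Q w' := by
  cases hm with
  | @init l r s a ha =>
    obtain rfl : q0 = a := (show a = q0 from ha).symm
    obtain ⟨n1, r', rfl, hn1, hr⟩ := inst_append_left hi
    obtain ⟨n2, mcl, rfl, hn2, hcl⟩ := inst_append_left hn1
    obtain ⟨n3, ms, rfl, hn3, hs⟩ := inst_append_left hn2
    obtain ⟨ml, mop, rfl, hl, hop⟩ := inst_append_left hn3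
    obtain rfl := inst_op hop
    obtain rfl := inst_cl hcl
    obtain ⟨s', rfl, hss⟩ := inst_strOf_left hs
    refine ⟨ml ++ [TSym.op, TSym.ltr ({q0} : Set U), TSym.slash] ++ strOf s' ++ [TSym.cl] ++ r',
      GMove.init (Set.mem_singleton _), ?_, ?_⟩
    · exact inst_append (inst_append (inst_append (inst_append hl
        (List.Forall₂.cons SymInst.op (List.Forall₂.cons (SymInst.ltr (Set.mem_singleton _))
          (List.Forall₂.cons SymInst.slash List.Forall₂.nil))))
        (instS_strOf hss)) (List.Forall₂.cons SymInst.cl List.Forall₂.nil)) hr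
    · rw [invQ_append, invQ_append, invQ_append, invQ_append] at hinv ⊢
      obtain ⟨⟨⟨⟨h_ml, _⟩, h_s⟩, h_cl⟩, h_r⟩ := hinv
      refine ⟨⟨⟨⟨h_ml, ?_⟩, h_s⟩, h_cl⟩, h_r⟩
      intro B hB
      have : B = ({q0} : Set U) := by simpa using hB
      subst this
      exact Set.singleton_subset_iff.mpr hq0
  | @horiz l r s a b c hΔab =>
    obtain ⟨n1, r', rfl, hn1, hr⟩ := inst_append_left hi
    obtain ⟨n2, mcl, rfl, hn2, hcl⟩ := inst_append_left hn1
    obtain ⟨n3, ms, rfl, hn3, hs⟩ := inst_append_left hn2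
    obtain ⟨ml, mseg, rfl, hl, hseg⟩ := inst_append_left hn3
    obtain rfl := inst_cl hcl
    obtain ⟨s', rfl, hss⟩ := inst_strOf_left hs
    obtain ⟨y1, m1, rfl, hy1, h1⟩ := inst_cons_left hseg
    obtain ⟨y2, m2, rfl, hy2, h2⟩ := inst_cons_left h1
    obtain ⟨y3, m3, rfl, hy3, h3⟩ := inst_cons_left h2
    obtain ⟨y4, m4, rfl, hy4, h4⟩ := inst_cons_left h3
    obtain rfl := inst_nil_left h4
    obtain rfl := symInst_op_left hy1
    obtain ⟨a', rfl, ha'⟩ := symInst_ltr_left hy2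
    obtain rfl := symInst_slash_left hy3
    obtain ⟨b', rfl, hb'⟩ := symInst_ltr_left hy4
    have ha'Q : a' ⊆ Q := hinv a' (by simp)
    have hb'Q : b' ⊆ Q := hinv b' (by simp)
    refine ⟨ml ++ [TSym.op, TSym.ltr (detD Δ a' b'), TSym.slash] ++ strOf s' ++ [TSym.cl] ++ r',
      GMove.horiz ⟨ha'Q, hb'Q, rfl⟩, ?_, ?_⟩
    · exact inst_append (inst_append (inst_append (inst_append hl
        (List.Forall₂.cons SymInst.op
          (List.Forall₂.cons (SymInst.ltr ⟨a, ha', b, hb', hΔab⟩)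
          (List.Forall₂.cons SymInst.slash List.Forall₂.nil))))
        (instS_strOf hss)) (List.Forall₂.cons SymInst.cl List.Forall₂.nil)) hr
    · rw [invQ_append, invQ_append, invQ_append, invQ_append] at hinv ⊢
      obtain ⟨⟨⟨⟨h_ml, _⟩, h_s⟩, h_cl⟩, h_r⟩ := hinv
      refine ⟨⟨⟨⟨h_ml, ?_⟩, h_s⟩, h_cl⟩, h_r⟩
      intro B hB
      have : B = detD Δ a' b' := by simpa using hB
      subst this
      exact detD_subset hΔ a' b'
  | @vert l r a b hb =>
    obtain rfl : b = a := hb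
    obtain ⟨n1, r', rfl, hn1, hr⟩ := inst_append_left hi
    obtain ⟨ml, mseg, rfl, hl, hseg⟩ := inst_append_left hn1
    obtain ⟨y1, m1, rfl, hy1, h1⟩ := inst_cons_left hseg
    obtain ⟨y2, m2, rfl, hy2, h2⟩ := inst_cons_left h1
    obtain ⟨y3, m3, rfl, hy3, h3⟩ := inst_cons_left h2
    obtain ⟨y4, m4, rfl, hy4, h4⟩ := inst_cons_left h3
    obtain rfl := inst_nil_left h4
    obtain rfl := symInst_op_left hy1
    obtain ⟨a', rfl, ha'⟩ := symInst_ltr_left hy2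
    obtain rfl := symInst_slash_left hy3
    obtain rfl := symInst_cl_left hy4
    have ha'Q : a' ⊆ Q := hinv a' (by simp)
    refine ⟨ml ++ [TSym.ltr a'] ++ r', GMove.vert (Set.mem_singleton _), ?_, ?_⟩
    · exact inst_append (inst_append hl
        (List.Forall₂.cons (SymInst.ltr ha') List.Forall₂.nil)) hr
    · rw [invQ_append, invQ_append] at hinv ⊢
      obtain ⟨⟨h_ml, _⟩, h_r⟩ := hinv
      refine ⟨⟨h_ml, ?_⟩, h_r⟩
      intro B hB
      have : B = a' := by simpa using hB
      subst this
      exact ha'Q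

/-- Backward lock-step simulation. -/
theorem bwd_step {q0 : U} {Q : Set U} {Δ : Set (U × U × U)}
    {v' w' : List (TSym (Set U))} {w : List (TSym U)}
    (hi : Inst w w') (hm : NMove ({q0} : Set U) (detRules Q Δ) v' w') :
    ∃ v, Inst v v' ∧ NMove q0 Δ v w := by
  cases hm with
  | @init l' r' s' A hA =>
    obtain rfl : A = {q0} := hA
    obtain ⟨n1, wr, rfl, hn1, hr⟩ := inst_append_right hi
    obtain ⟨n2, wcl, rfl, hn2, hcl⟩ := inst_append_right hn1
    obtain ⟨n3, ws, rfl, hn3, hs⟩ := inst_append_right hn2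
    obtain ⟨wl, wseg, rfl, hl, hseg⟩ := inst_append_right hn3
    obtain ⟨x1, u1, rfl, hx1, hu1⟩ := inst_cons_right hseg
    obtain ⟨x2, u2, rfl, hx2, hu2⟩ := inst_cons_right hu1
    obtain ⟨x3, u3, rfl, hx3, hu3⟩ := inst_cons_right hu2
    obtain rfl := inst_nil_right hu3
    obtain rfl := symInst_op_right hx1
    obtain ⟨a, ha, rfl⟩ := symInst_ltr_right hx2
    obtain rfl : q0 = a := (show a = q0 from ha).symm
    obtain rfl := symInst_slash_right hx3
    obtain ⟨s, rfl, hss⟩ := inst_strOf_right hs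
    obtain ⟨z, u, rfl, hz, hu⟩ := inst_cons_right hcl
    obtain rfl := inst_nil_right hu
    obtain rfl := symInst_cl_right hz
    refine ⟨wl ++ [TSym.op] ++ strOf s ++ [TSym.cl] ++ wr, ?_,
      GMove.init (Set.mem_singleton _)⟩
    exact inst_append (inst_append (inst_append (inst_append hl
      (List.Forall₂.cons SymInst.op List.Forall₂.nil))
      (instS_strOf hss)) (List.Forall₂.cons SymInst.cl List.Forall₂.nil)) hr
  | @horiz l' r' s' A B C hrule =>
    obtain ⟨hAQ, hBQ, hC⟩ := hrule
    have hC' : C = detD Δ A B := hC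
    subst hC' 
    obtain ⟨n1, wr, rfl, hn1, hr⟩ := inst_append_right hi
    obtain ⟨n2, wcl, rfl, hn2, hcl⟩ := inst_append_right hn1
    obtain ⟨n3, ws, rfl, hn3, hs⟩ := inst_append_right hn2
    obtain ⟨wl, wseg, rfl, hl, hseg⟩ := inst_append_right hn3
    obtain ⟨x1, u1, rfl, hx1, hu1⟩ := inst_cons_right hseg
    obtain ⟨x2, u2, rfl, hx2, hu2⟩ := inst_cons_right hu1
    obtain ⟨x3, u3, rfl, hx3, hu3⟩ := inst_cons_right hu2
    obtain rfl := inst_nil_right hu3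
    obtain rfl := symInst_op_right hx1
    obtain ⟨c, hc, rfl⟩ := symInst_ltr_right hx2
    obtain rfl := symInst_slash_right hx3
    obtain ⟨s, rfl, hss⟩ := inst_strOf_right hs
    obtain ⟨z, u, rfl, hz, hu⟩ := inst_cons_right hcl
    obtain rfl := inst_nil_right hu
    obtain rfl := symInst_cl_right hz
    obtain ⟨a, haA, b, hbB, hab⟩ := hc
    refine ⟨wl ++ [TSym.op, TSym.ltr a, TSym.slash, TSym.ltr b] ++ strOf s ++ [TSym.cl] ++ wr,
      ?_, GMove.horiz hab⟩
    exact inst_append (inst_append (inst_append (inst_append hl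
      (List.Forall₂.cons SymInst.op (List.Forall₂.cons (SymInst.ltr haA)
        (List.Forall₂.cons SymInst.slash
        (List.Forall₂.cons (SymInst.ltr hbB) List.Forall₂.nil)))))
      (instS_strOf hss)) (List.Forall₂.cons SymInst.cl List.Forall₂.nil)) hr
  | @vert l' r' A B hB =>
    obtain rfl : B = A := hB
    obtain ⟨n1, wr, rfl, hn1, hr⟩ := inst_append_right hi
    obtain ⟨wl, wseg, rfl, hl, hseg⟩ := inst_append_right hn1
    obtain ⟨x1, u1, rfl, hx1, hu1⟩ := inst_cons_right hseg
    obtain rfl := inst_nil_right hu1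
    obtain ⟨b, hb, rfl⟩ := symInst_ltr_right hx1
    refine ⟨wl ++ [TSym.op, TSym.ltr b, TSym.slash, TSym.cl] ++ wr, ?_,
      GMove.vert (Set.mem_singleton _)⟩
    exact inst_append (inst_append hl
      (List.Forall₂.cons SymInst.op (List.Forall₂.cons (SymInst.ltr hb)
        (List.Forall₂.cons SymInst.slash
        (List.Forall₂.cons SymInst.cl List.Forall₂.nil))))) hr

theorem fwd_sim {q0 : U} {Q : Set U} {Δ : Set (U × U × U)}
    (hq0 : q0 ∈ Q) (hΔ : ∀ p ∈ Δ, p.1 ∈ Q ∧ p.2.1 ∈ Q ∧ p.2.2 ∈ Q)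
    {v w : List (TSym U)} {v' : List (TSym (Set U))}
    (hi : Inst v v') (hinv : InvQ Q v')
    (h : Relation.ReflTransGen (NMove q0 Δ) v w) :
    ∃ w', Relation.ReflTransGen (NMove ({q0} : Set U) (detRules Q Δ)) v' w' ∧
      Inst w w' ∧ InvQ Q w' := by
  induction h with
  | refl => exact ⟨v', Relation.ReflTransGen.refl, hi, hinv⟩
  | tail h1 h2 ih =>
    obtain ⟨m', hm', him, hinvm⟩ := ih
    obtain ⟨w', h3, h4, h5⟩ := fwd_step hq0 hΔ him hinvm h2
    exact ⟨w', hm'.tail h3, h4, h5⟩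

theorem bwd_sim {q0 : U} {Q : Set U} {Δ : Set (U × U × U)}
    {v' w' : List (TSym (Set U))}
    (h : Relation.ReflTransGen (NMove ({q0} : Set U) (detRules Q Δ)) v' w')
    {w : List (TSym U)} (hi : Inst w w') :
    ∃ v, Inst v v' ∧ Relation.ReflTransGen (NMove q0 Δ) v w := by
  induction h generalizing w with
  | refl => exact ⟨w, hi, Relation.ReflTransGen.refl⟩
  | tail h1 h2 ih =>
    obtain ⟨m, him, hmw⟩ := bwd_step hi h2
    obtain ⟨v, hv, hvm⟩ := ih him
    exact ⟨v, hv, hvm.tail hmw⟩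

theorem complete_automaton {U : Type} [Infinite U] (Sa Q Qf : Set U) (q0 : U)
    (Δ : Set (U × U × U)) (hwf : NWF Sa Q Qf q0 Δ) :
    ∃ (Q' Qf' : Set (Set U)) (q0' : Set U) (Δ' : Set (Set U × Set U × Set U)),
      NWF (sing '' Sa) Q' Qf' q0' Δ' ∧
      (∀ a' ∈ Q', ∀ b' ∈ Q', ∃! c', (a', b', c') ∈ Δ') ∧
      NLang (sing '' Sa) q0' Δ' Qf' = treeRel sing '' NLang Sa q0 Δ Qf := by
  obtain ⟨hQfin, hSaQ, hQfQ, hq0Q, hΔQ⟩ := hwf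
  refine ⟨{s : Set U | s ⊆ Q}, {A : Set U | A ⊆ Q ∧ ∃ q ∈ A, q ∈ Qf},
    ({q0} : Set U), detRules Q Δ, ?_, ?_, ?_⟩
  · refine ⟨hQfin.finite_subsets, ?_, fun A hA => hA.1,
      Set.singleton_subset_iff.mpr hq0Q, fun p hp => ⟨hp.1, hp.2.1, ?_⟩⟩
    · rintro _ ⟨a, ha, rfl⟩
      intro x hx
      obtain rfl : x = a := hx
      exact hSaQ ha
    · show p.2.2 ∈ {s : Set U | s ⊆ Q}
      rw [hp.2.2]
      exact detD_subset hΔQ _ _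
  · intro a' ha' b' hb'
    exact ⟨detD Δ a' b', ⟨ha', hb', rfl⟩, fun c' hc' => hc'.2.2⟩
  · ext t'
    constructor
    · rintro ⟨htree', qf', hqf', hrun⟩
      obtain ⟨t, htree, rfl⟩ := tree_of_sing htree'
      obtain ⟨hsub, q, hqA, hqQf⟩ := hqf'
      have hfin : Inst (finalTree q) (finalTree qf') :=
        List.Forall₂.cons SymInst.op (List.Forall₂.cons (SymInst.ltr hqA)
          (List.Forall₂.cons SymInst.slash
          (List.Forall₂.cons SymInst.cl List.Forall₂.nil)))
      obtain ⟨v, hv, hrunN⟩ := bwd_sim hrun hfin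
      have hvt : v = t := inst_treeRel_eq hv
      exact ⟨t, ⟨htree, q, hqQf, hvt ▸ hrunN⟩, rfl⟩
    · rintro ⟨t, ⟨htree, q, hqQf, hrunN⟩, rfl⟩
      refine ⟨isTree_treeRel htree, ?_⟩
      have hinv : InvQ Q (treeRel sing t) := by
        intro A hA
        simp only [treeRel, List.mem_map] at hA
        obtain ⟨x, hx, hxA⟩ := hA
        rcases isTree_mem htree x hx with rfl | rfl | ⟨a, haSa, rfl⟩
        · simp [symRel] at hxA
        · simp [symRel] at hxA
        · simp only [symRel, TSym.ltr.injEq] at hxA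
          subst hxA
          intro y hy
          obtain rfl : y = a := hy
          exact hSaQ haSa
      obtain ⟨w', hrun', hiw, hinvw⟩ := fwd_sim hq0Q hΔQ (inst_treeRel t) hinv hrunN
      obtain ⟨y1, m1, rfl, h1, hh1⟩ := inst_cons_left hiw
      obtain ⟨y2, m2, rfl, h2, hh2⟩ := inst_cons_left hh1
      obtain ⟨y3, m3, rfl, h3, hh3⟩ := inst_cons_left hh2
      obtain ⟨y4, m4, rfl, h4, hh4⟩ := inst_cons_left hh3
      obtain rfl := inst_nil_left hh4
      obtain rfl := symInst_op_left h1
      obtain ⟨A, rfl, hqA⟩ := symInst_ltr_left h2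
      obtain rfl := symInst_slash_left h3
      obtain rfl := symInst_cl_left h4
      exact ⟨A, ⟨hinvw A (by simp), q, hqA, hqQf⟩, hrun'⟩

end StringTree
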